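/- Privacy-level monotonicity of the flip probability (key step of the One Bit Cluster theorem): Let p₁, p₂ ∈ [0, 1], ε ≥ 0, and suppose α ∈ [0, 1/2] satisfies the two-sided privacy constraints exp(−ε)·(p₂(1−α)+(1−p₂)α) ≤ p₁(1−α)+(1−p₁)α ≤ exp(ε)·(p₂(1−α)+(1−p₂)α) and exp(−ε)·((1−p₂)(1−α)+p₂α) ≤ (1−p₁)(1−α)+p₁α ≤ exp(ε)·((1−p₂)(1−α)+p₂α). Then every α' with α ≤ α' ≤ 1/2 also satisfies the same constraints (with α replaced by α'). -/
import Mathlib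


/-- The two-sided privacy constraints at level `ε` for an edge between Bernoulli
profiles with parameters `p₁` and `p₂`, under flip probability `α`: both output
probabilities under `p₁` lie within a multiplicative factor `exp (±ε)` of the
corresponding output probabilities under `p₂`. -/
def PrivConstraints (ε p₁ p₂ α : ℝ) : Prop :=
  Real.exp (-ε) * (p₂ * (1 - α) + (1 - p₂) * α) ≤ p₁ * (1 - α) + (1 - p₁) * α ∧
  p₁ * (1 - α) + (1 - p₁) * α ≤ Real.exp ε * (p₂ * (1 - α) + (1 - p₂) * α) ∧
  Real.exp (-ε) * ((1 - p₂) * (1 - α) + p₂ * α) ≤ (1 - p₁) * (1 - α) + p₁ * α ∧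
  (1 - p₁) * (1 - α) + p₁ * α ≤ Real.exp ε * ((1 - p₂) * (1 - α) + p₂ * α)

/-- An affine function nonnegative at `α` and at `1/2` is nonnegative on `[α, 1/2]`. -/
lemma affine_nonneg_between (a b α α' : ℝ) (h1 : 0 ≤ a + α * b)
    (h2 : 0 ≤ a + (1 / 2) * b) (h3 : α ≤ α') (h4 : α' ≤ 1 / 2) :
    0 ≤ a + α' * b := by
  rcases eq_or_lt_of_le (le_trans h3 h4) with heq | hlt
  · have : α' = α := le_antisymm (heq ▸ h4) h3
    simpa [this] using h1
  · nlinarith [mul_nonneg (sub_nonneg.2 h3) h2, mul_nonneg (sub_nonneg.2 h4) h1]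

/-- Privacy-level monotonicity of the flip probability: if `α ∈ [0, 1/2]` satisfies
the two-sided privacy constraints at level `ε`, then so does every `α'` with
`α ≤ α' ≤ 1/2`. -/
theorem priv_constraints_monotone (p₁ p₂ ε α : ℝ)
    (hp₁ : p₁ ∈ Set.Icc (0:ℝ) 1) (hp₂ : p₂ ∈ Set.Icc (0:ℝ) 1) (hε : 0 ≤ ε)
    (hα : α ∈ Set.Icc (0:ℝ) (1 / 2))
    (h : PrivConstraints ε p₁ p₂ α) :
    ∀ α' : ℝ, α ≤ α' → α' ≤ 1 / 2 → PrivConstraints ε p₁ p₂ α' := by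
  intro α' h3 h4
  obtain ⟨c1, c2, c3, c4⟩ := h
  have hE : Real.exp (-ε) ≤ 1 := Real.exp_le_one_iff.2 (by linarith)
  have hE' : 1 ≤ Real.exp ε := Real.one_le_exp hε
  refine ⟨?_, ?_, ?_, ?_⟩
  · have := affine_nonneg_between (p₁ - Real.exp (-ε) * p₂)
      ((1 - 2 * p₁) - Real.exp (-ε) * (1 - 2 * p₂)) α α'
      (by nlinarith) (by nlinarith) h3 h4
    nlinarith
  · have := affine_nonneg_between (Real.exp ε * p₂ - p₁)
      (Real.exp ε * (1 - 2 * p₂) - (1 - 2 * p₁)) α α'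
      (by nlinarith) (by nlinarith) h3 h4
    nlinarith
  · have := affine_nonneg_between ((1 - p₁) - Real.exp (-ε) * (1 - p₂))
      ((2 * p₁ - 1) - Real.exp (-ε) * (2 * p₂ - 1)) α α'
      (by nlinarith) (by nlinarith) h3 h4
    nlinarith
  · have := affine_nonneg_between (Real.exp ε * (1 - p₂) - (1 - p₁))
      (Real.exp ε * (2 * p₂ - 1) - (2 * p₁ - 1)) α α'
      (by nlinarith) (by nlinarith) h3 h4
    nlinarith
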